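/- For 0 < α < 1 and a continuously differentiable function f on [0,∞) of exponential order, the Laplace transform of 𝔇_cos^α f(t) = (N(α)/(1-α)) ∫₀ᵗ cos((α/(1-α))(t-τ)) f'(τ) dτ equals (s(1-α) N(α) / ((1-α)² s² + α²)) · (s F(s) - f(0)). -/

import Mathlib

section helpers
open MeasureTheory Set Filter Real

lemma expcos_integrable (s K : ℝ) (hs : 0 < s) (a : ℝ) :
    IntegrableOn (fun u => Real.exp (-s*u) * Real.cos (K*u)) (Ioi a) := by
  refine ((exp_neg_integrableOn_Ioi a hs).mono' ?_ ?_)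
  · exact ((Real.continuous_exp.comp (continuous_const.mul continuous_id)).mul
      (Real.continuous_cos.comp (continuous_const.mul continuous_id))).aestronglyMeasurable
  · filter_upwards with u
    rw [norm_mul, Real.norm_eq_abs, Real.norm_eq_abs, abs_exp]
    nlinarith [abs_cos_le_one (K*u), Real.exp_pos (-s*u), abs_nonneg (Real.cos (K*u))]

lemma integral_expcos (s K : ℝ) (hs : 0 < s) :
    ∫ u in Ioi (0:ℝ), Real.exp (-s*u) * Real.cos (K*u) = s / (s^2 + K^2) := by
  have hD : (0:ℝ) < s^2 + K^2 := by positivity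
  set g : ℝ → ℝ := fun u => Real.exp (-s*u) * ((-s) * Real.cos (K*u) + K * Real.sin (K*u)) / (s^2+K^2) with hg
  have hd : ∀ u ∈ Ici (0:ℝ), HasDerivAt g (Real.exp (-s*u) * Real.cos (K*u)) u := by
    intro u _
    have h1 : HasDerivAt (fun u : ℝ => -s*u) (-s) u := by
      simpa using (hasDerivAt_id u).const_mul (-s)
    have h2 : HasDerivAt (fun u : ℝ => K*u) K u := by
      simpa using (hasDerivAt_id u).const_mul K
    have he : HasDerivAt (fun u : ℝ => Real.exp (-s*u)) (Real.exp (-s*u) * (-s)) u :=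
      (Real.hasDerivAt_exp _).comp u h1
    have hc : HasDerivAt (fun u : ℝ => Real.cos (K*u)) (-Real.sin (K*u) * K) u :=
      (Real.hasDerivAt_cos _).comp u h2
    have hsin : HasDerivAt (fun u : ℝ => Real.sin (K*u)) (Real.cos (K*u) * K) u :=
      (Real.hasDerivAt_sin _).comp u h2
    have := ((he.mul ((hc.const_mul (-s)).add (hsin.const_mul K)))).div_const (s^2+K^2)
    refine this.congr_deriv ?_
    simp only [Pi.add_apply]
    rw [div_eq_iff hD.ne']
    ring
  have hint : IntegrableOn (fun u => Real.exp (-s*u) * Real.cos (K*u)) (Ioi 0) :=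
    expcos_integrable s K hs 0
  have htend : Tendsto g atTop (nhds 0) := by
    apply squeeze_zero_norm (a := fun u => (s + |K|)/(s^2+K^2) * Real.exp (-s*u))
    · intro u
      rw [hg]
      simp only [Real.norm_eq_abs, abs_div, abs_mul, abs_exp, abs_of_pos hD]
      rw [div_le_iff₀ hD, div_mul_eq_mul_div, div_mul_cancel₀ _ (ne_of_gt hD)]
      have h1 : |(-s) * Real.cos (K*u) + K * Real.sin (K*u)| ≤ s + |K| := by
        calc _ ≤ |(-s) * Real.cos (K*u)| + |K * Real.sin (K*u)| := abs_add_le _ _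
        _ ≤ s + |K| := by
          rw [abs_mul, abs_mul, abs_neg, abs_of_pos hs]
          nlinarith [abs_cos_le_one (K*u), abs_sin_le_one (K*u), abs_nonneg K, abs_nonneg (Real.sin (K*u)), abs_nonneg (Real.cos (K*u))]
      nlinarith [Real.exp_pos (-s*u), abs_nonneg ((-s) * Real.cos (K*u) + K * Real.sin (K*u))]
    · rw [show (0:ℝ) = (s + |K|)/(s^2+K^2) * 0 by ring]
      apply Tendsto.const_mul
      have : Tendsto (fun u : ℝ => -s * u) atTop atBot := by
        apply Tendsto.const_mul_atTop_of_neg (neg_neg_iff_pos.mpr hs) tendsto_id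
      exact Real.tendsto_exp_atBot.comp this
  have := integral_Ioi_of_hasDerivAt_of_tendsto' hd hint htend
  rw [this, hg]
  simp
  field_simp

lemma expbound_integrable (g : ℝ → ℝ) (hg : Continuous g) (M c s : ℝ)
    (hb : ∀ t ≥ 0, |g t| ≤ M * Real.exp (c*t)) (hsc : c < s) :
    IntegrableOn (fun τ => Real.exp (-s*τ) * g τ) (Ioi 0) := by
  refine (((exp_neg_integrableOn_Ioi 0 (by linarith : (0:ℝ) < s - c)).const_mul M).mono' ?_ ?_)
  · exact ((Real.continuous_exp.comp (continuous_const.mul continuous_id)).mul hg).aestronglyMeasurable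
  · filter_upwards [ae_restrict_mem measurableSet_Ioi] with τ hτ
    rw [Real.norm_eq_abs, abs_mul, abs_exp]
    have h1 := hb τ (le_of_lt hτ)
    have : Real.exp (-s*τ) * |g τ| ≤ Real.exp (-s*τ) * (M * Real.exp (c*τ)) :=
      mul_le_mul_of_nonneg_left h1 (Real.exp_pos _).le
    refine this.trans (le_of_eq ?_)
    rw [mul_comm (Real.exp (-s*τ)), mul_assoc, ← Real.exp_add]
    ring_nf

lemma laplace_deriv (f : ℝ → ℝ) (hf : ContDiff ℝ 1 f) (M c s : ℝ)
    (hexp : ∀ t ≥ 0, |f t| ≤ M * Real.exp (c*t))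
    (hexp' : ∀ t ≥ 0, |deriv f t| ≤ M * Real.exp (c*t))
    (hs : 0 < s) (hsc : c < s) :
    ∫ τ in Ioi (0:ℝ), Real.exp (-s*τ) * deriv f τ
      = s * (∫ τ in Ioi (0:ℝ), Real.exp (-s*τ) * f τ) - f 0 := by
  have hfd : Differentiable ℝ f := hf.differentiable one_ne_zero
  have hfc : Continuous (deriv f) := (hf.iterate_deriv' 0 1).continuous
  have hint1 : IntegrableOn (fun τ => Real.exp (-s*τ) * deriv f τ) (Ioi 0) :=
    expbound_integrable _ hfc M c s hexp' hsc
  have hint2 : IntegrableOn (fun τ => Real.exp (-s*τ) * f τ) (Ioi 0) :=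
    expbound_integrable _ hfd.continuous M c s hexp hsc
  have hd : ∀ τ ∈ Ici (0:ℝ), HasDerivAt (fun τ => Real.exp (-s*τ) * f τ)
      (Real.exp (-s*τ) * deriv f τ - s * (Real.exp (-s*τ) * f τ)) τ := by
    intro τ _
    have h1 : HasDerivAt (fun u : ℝ => -s*u) (-s) τ := by
      simpa using (hasDerivAt_id τ).const_mul (-s)
    have he : HasDerivAt (fun u : ℝ => Real.exp (-s*u)) (Real.exp (-s*τ) * (-s)) τ :=
      (Real.hasDerivAt_exp _).comp τ h1
    have := he.mul (hfd τ).hasDerivAt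
    refine this.congr_deriv ?_
    ring
  have htend : Tendsto (fun τ => Real.exp (-s*τ) * f τ) atTop (nhds 0) := by
    apply squeeze_zero_norm' (a := fun τ => M * Real.exp (-(s-c)*τ))
    · filter_upwards [eventually_ge_atTop (0:ℝ)] with τ hτ
      rw [Real.norm_eq_abs, abs_mul, abs_exp]
      have := mul_le_mul_of_nonneg_left (hexp τ hτ) (Real.exp_pos (-s*τ)).le
      refine this.trans (le_of_eq ?_)
      rw [← mul_assoc, mul_comm (Real.exp _) M, mul_assoc, ← Real.exp_add]
      ring_nf
    · rw [show (0:ℝ) = M * 0 by ring]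
      apply Tendsto.const_mul
      have : Tendsto (fun τ : ℝ => -(s-c) * τ) atTop atBot :=
        Tendsto.const_mul_atTop_of_neg (by linarith) tendsto_id
      exact Real.tendsto_exp_atBot.comp this
  have key := integral_Ioi_of_hasDerivAt_of_tendsto' hd (hint1.sub (hint2.const_mul s)) htend
  rw [integral_sub hint1 (hint2.const_mul s), integral_const_mul] at key
  rw [mul_zero, Real.exp_zero, one_mul, zero_sub] at key
  linarith

lemma mul_exp_neg_le' (a t : ℝ) (ha : 0 < a) (ht : 0 ≤ t) :
    t * Real.exp (-a*t) ≤ (2/a) * Real.exp (-(a/2)*t) := by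
  set x := a*t/2 with hx
  have hx0 : 0 ≤ x := by positivity
  have h1 : x * Real.exp (-x) ≤ 1 := by
    have h2 : x ≤ Real.exp x := (by linarith : x ≤ x + 1).trans (Real.add_one_le_exp x)
    rw [Real.exp_neg, ← div_eq_mul_inv, div_le_one (Real.exp_pos x)]
    exact h2
  have key : t * Real.exp (-a*t) = (2/a) * (x * Real.exp (-x)) * Real.exp (-(a/2)*t) := by
    rw [show -a*t = -x + -(a/2)*t by rw [hx]; ring, Real.exp_add]
    field_simp
    ring
  rw [key]
  have h4 := Real.exp_pos (-(a/2)*t)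
  have h5 : (0:ℝ) < 2/a := by positivity
  nlinarith [mul_le_mul_of_nonneg_right (mul_le_mul_of_nonneg_left h1 h5.le) h4.le]

end helpers

/-- Laplace transform of `g` at `s`. -/
noncomputable def laplace (g : ℝ → ℝ) (s : ℝ) : ℝ :=
  ∫ t in Set.Ioi (0:ℝ), Real.exp (-s * t) * g t

/-- The (DC) fractional operator. -/
noncomputable def DCop (N α : ℝ) (f : ℝ → ℝ) (t : ℝ) : ℝ :=
  (N / (1 - α)) * ∫ τ in (0:ℝ)..t, Real.cos ((α/(1-α)) * (t - τ)) * deriv f τ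

open MeasureTheory Set Filter Real in
theorem laplace_DC (α N : ℝ) (hα : 0 < α) (hα1 : α < 1)
    (f : ℝ → ℝ) (hf : ContDiff ℝ 1 f)
    (M c : ℝ) (hexp : ∀ t ≥ 0, |f t| ≤ M * Real.exp (c * t))
    (hexp' : ∀ t ≥ 0, |deriv f t| ≤ M * Real.exp (c * t))
    (s : ℝ) (hs : 0 < s) (hsc : c < s) :
    laplace (DCop N α f) s
      = (s * (1 - α) * N / ((1 - α)^2 * s^2 + α^2)) * (s * laplace f s - f 0) := by
  have hα' : (0:ℝ) < 1 - α := by linarith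
  set K := α/(1-α) with hK
  have hfd : Differentiable ℝ f := hf.differentiable one_ne_zero
  have hfc : Continuous (deriv f) := (hf.iterate_deriv' 0 1).continuous
  have hM : 0 ≤ M := by
    have := hexp 0 le_rfl
    simp only [mul_zero, Real.exp_zero, mul_one] at this
    exact (abs_nonneg _).trans this
  set a := min s (s - c) with ha
  have ha0 : 0 < a := lt_min hs (by linarith)
  set S : Set (ℝ × ℝ) := {p : ℝ × ℝ | 0 < p.2 ∧ p.2 < p.1} with hS
  set body : ℝ × ℝ → ℝ := fun p => Real.exp (-s*p.1) * (Real.cos (K*(p.1-p.2)) * deriv f p.2)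
    with hbody
  set G : ℝ × ℝ → ℝ := S.indicator body with hG
  have hSmeas : MeasurableSet S :=
    (measurableSet_lt measurable_const measurable_snd).inter
      (measurableSet_lt measurable_snd measurable_fst)
  have hbodycont : Continuous body :=
    (Real.continuous_exp.comp (continuous_const.mul continuous_fst)).mul
      ((Real.continuous_cos.comp (continuous_const.mul (continuous_fst.sub continuous_snd))).mul
        (hfc.comp continuous_snd))
  have hGmeas : AEStronglyMeasurable G (volume.prod volume) :=
    (hbodycont.aestronglyMeasurable).indicator hSmeas
  -- sections in τ
  have hsec : ∀ t : ℝ, (fun τ => G (t, τ)) = (Ioo (0:ℝ) t).indicator (fun τ => body (t, τ)) := by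
    intro t
    funext τ
    by_cases h : τ ∈ Ioo (0:ℝ) t
    · rw [indicator_of_mem h, hG, indicator_of_mem]
      exact ⟨h.1, h.2⟩
    · rw [indicator_of_notMem h, hG, indicator_of_notMem]
      intro hc
      exact h ⟨hc.1, hc.2⟩
  -- integrability on product
  have hGint : Integrable G (volume.prod volume) := by
    rw [integrable_prod_iff hGmeas]
    constructor
    · filter_upwards with t
      rw [hsec t]
      rw [integrable_indicator_iff measurableSet_Ioo]
      exact ((hbodycont.comp (continuous_const.prodMk continuous_id)).integrableOn_Ioc).mono_set
        Ioo_subset_Ioc_self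
    · have hmeas2 : AEStronglyMeasurable (fun t => ∫ τ, ‖G (t, τ)‖) volume :=
        hGmeas.norm.integral_prod_right'
      refine Integrable.mono' (g := fun t => (Ioi (0:ℝ)).indicator
          (fun t => (4*M/a) * Real.exp (-(a/2)*t)) t) ?_ hmeas2 ?_
      · rw [integrable_indicator_iff measurableSet_Ioi]
        exact (exp_neg_integrableOn_Ioi 0 (by positivity)).const_mul _
      · filter_upwards with t
        have hnorm : (fun τ => ‖G (t, τ)‖)
            = (Ioo (0:ℝ) t).indicator (fun τ => ‖body (t, τ)‖) := by
          funext τ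
          rw [congrFun (hsec t) τ]
          exact norm_indicator_eq_indicator_norm _ _
        by_cases ht : 0 < t
        · rw [indicator_of_mem (show t ∈ Ioi (0:ℝ) from mem_Ioi.mpr ht), hnorm,
            integral_indicator measurableSet_Ioo]
          have hC : ∀ τ ∈ Ioo (0:ℝ) t, ‖‖body (t, τ)‖‖
              ≤ Real.exp (-s*t) * (M * (1 + Real.exp (c*t))) := by
            intro τ hτ
            rw [norm_norm, hbody]
            simp only [norm_mul, Real.norm_eq_abs, abs_exp]
            have h1 : |Real.cos (K*(t-τ))| ≤ 1 := abs_cos_le_one _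
            have h2 : |deriv f τ| ≤ M * Real.exp (c*τ) := hexp' τ hτ.1.le
            have h3 : Real.exp (c*τ) ≤ 1 + Real.exp (c*t) := by
              rcases le_or_gt c 0 with hc | hc
              · have : c*τ ≤ 0 := mul_nonpos_of_nonpos_of_nonneg hc hτ.1.le
                have := Real.exp_le_one_iff.mpr this
                nlinarith [Real.exp_pos (c*t)]
              · have : c*τ ≤ c*t := by nlinarith [hτ.2]
                have := Real.exp_le_exp.mpr this
                linarith
            have h4 := Real.exp_pos (-s*t)
            have h6 : |Real.cos (K*(t-τ))| * |deriv f τ| ≤ |deriv f τ| := by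
              nlinarith [abs_nonneg (deriv f τ)]
            have h7 : |deriv f τ| ≤ M * (1 + Real.exp (c*t)) :=
              h2.trans (by nlinarith)
            exact mul_le_mul_of_nonneg_left (h6.trans h7) h4.le
          have hfin : volume (Ioo (0:ℝ) t) < ⊤ := by
            rw [Real.volume_Ioo]; exact ENNReal.ofReal_lt_top
          have := norm_setIntegral_le_of_norm_le_const hfin hC
          rw [measureReal_def, Real.volume_Ioo, sub_zero, ENNReal.toReal_ofReal ht.le] at this
          have hb : ‖∫ τ in Ioo (0:ℝ) t, ‖body (t, τ)‖‖ = ∫ τ in Ioo (0:ℝ) t, ‖body (t, τ)‖ := by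
            rw [Real.norm_eq_abs, abs_of_nonneg]
            exact integral_nonneg fun τ => norm_nonneg _
          rw [hb] at this
          rw [Real.norm_eq_abs, abs_of_nonneg (integral_nonneg fun τ => norm_nonneg _)]
          refine this.trans ?_
          -- exp(-st) * (M*(1+exp(ct))) * t ≤ (4M/a) exp(-(a/2) t)
          have key1 : Real.exp (-s*t) * (M * (1 + Real.exp (c*t))) * t
              = M * (t * Real.exp (-s*t)) + M * (t * Real.exp ((c-s)*t)) := by
            rw [show (c-s)*t = c*t + -s*t by ring, Real.exp_add]; ring
          have hb1 : t * Real.exp (-s*t) ≤ t * Real.exp (-a*t) := by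
            have : -s*t ≤ -a*t := by nlinarith [min_le_left s (s-c)]
            exact mul_le_mul_of_nonneg_left (Real.exp_le_exp.mpr this) ht.le
          have hb2 : t * Real.exp ((c-s)*t) ≤ t * Real.exp (-a*t) := by
            have : (c-s)*t ≤ -a*t := by nlinarith [min_le_right s (s-c)]
            exact mul_le_mul_of_nonneg_left (Real.exp_le_exp.mpr this) ht.le
          have hb3 := mul_exp_neg_le' a t ha0 ht.le
          calc Real.exp (-s*t) * (M * (1 + Real.exp (c*t))) * t
              ≤ M * (t * Real.exp (-a*t)) + M * (t * Real.exp (-a*t)) := by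
                rw [key1]
                exact add_le_add (mul_le_mul_of_nonneg_left hb1 hM)
                  (mul_le_mul_of_nonneg_left hb2 hM)
            _ = 2*M * (t * Real.exp (-a*t)) := by ring
            _ ≤ 2*M * ((2/a) * Real.exp (-(a/2)*t)) :=
                mul_le_mul_of_nonneg_left hb3 (by linarith)
            _ = 4*M/a * Real.exp (-(a/2)*t) := by field_simp; ring
        · rw [indicator_of_notMem (show t ∉ Ioi (0:ℝ) by simpa using ht), hnorm,
            integral_indicator measurableSet_Ioo, Ioo_eq_empty ht]
          simp
  -- Step 1: LHS equals (N/(1-α)) * ∫ t, ∫ τ, G (t, τ)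
  have inner_eq : ∀ t : ℝ, (∫ τ, G (t, τ)) = (Ioi (0:ℝ)).indicator
      (fun t => Real.exp (-s*t) * ∫ τ in (0:ℝ)..t, Real.cos (K*(t-τ)) * deriv f τ) t := by
    intro t
    by_cases ht : 0 < t
    · rw [hsec t, integral_indicator measurableSet_Ioo,
        indicator_of_mem (show t ∈ Ioi (0:ℝ) from mem_Ioi.mpr ht),
        intervalIntegral.integral_of_le ht.le, integral_Ioc_eq_integral_Ioo,
        ← integral_const_mul]
    · have hzero : (fun τ => G (t, τ)) = fun _ => 0 := by
        rw [hsec t]; funext τ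
        rw [indicator_of_notMem]
        intro hc; exact ht (hc.1.trans hc.2)
      rw [hzero, indicator_of_notMem (show t ∉ Ioi (0:ℝ) by simpa using ht)]
      simp
  have step1 : laplace (DCop N α f) s = (N/(1-α)) * ∫ t, ∫ τ, G (t, τ) := by
    rw [laplace]
    have : ∀ t : ℝ, Real.exp (-s * t) * DCop N α f t
        = (N/(1-α)) * (Real.exp (-s*t) * ∫ τ in (0:ℝ)..t, Real.cos (K*(t-τ)) * deriv f τ) := by
      intro t; rw [DCop, ← hK]; ring
    rw [MeasureTheory.integral_congr_ae (Eventually.of_forall fun t => this t),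
      integral_const_mul]
    congr 1
    rw [← integral_indicator measurableSet_Ioi]
    exact (integral_congr_ae (Eventually.of_forall fun t => (inner_eq t).symm)).symm ▸ rfl
  -- Step 2: swap
  have swap : (∫ t, ∫ τ, G (t, τ)) = ∫ τ, ∫ t, G (t, τ) :=
    integral_integral_swap (f := fun t τ => G (t, τ)) hGint
  -- Step 3: inner integral after swap
  have inner_eq2 : ∀ τ : ℝ, (∫ t, G (t, τ)) = (Ioi (0:ℝ)).indicator
      (fun τ => (s/(s^2+K^2)) * (Real.exp (-s*τ) * deriv f τ)) τ := by
    intro τ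
    by_cases hτ : 0 < τ
    · have hrw : (fun t => G (t, τ)) = fun t => (Ioi (0:ℝ)).indicator
          (fun u => Real.exp (-s*(u+τ)) * (Real.cos (K*u) * deriv f τ)) (t - τ) := by
        funext t
        by_cases h : τ < t
        · rw [hG, indicator_of_mem (show (t, τ) ∈ S from ⟨hτ, h⟩),
            indicator_of_mem (show t - τ ∈ Ioi (0:ℝ) from mem_Ioi.mpr (by linarith))]
          rw [hbody]
          simp only
          rw [show t - τ + τ = t by ring]
        · rw [hG, indicator_of_notMem (show (t, τ) ∉ S from fun hc => h hc.2),
            indicator_of_notMem (show t - τ ∉ Ioi (0:ℝ) by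
              simp only [mem_Ioi, not_lt]; linarith [not_lt.mp h])]
      rw [hrw, integral_sub_right_eq_self
          (fun u => (Ioi (0:ℝ)).indicator (fun u => Real.exp (-s*(u+τ)) * (Real.cos (K*u) * deriv f τ)) u) τ,
        integral_indicator measurableSet_Ioi]
      have hψ : ∀ u : ℝ, Real.exp (-s*(u+τ)) * (Real.cos (K*u) * deriv f τ)
          = (Real.exp (-s*τ) * deriv f τ) * (Real.exp (-s*u) * Real.cos (K*u)) := by
        intro u
        rw [show -s*(u+τ) = -s*u + -s*τ by ring, Real.exp_add]; ring
      rw [MeasureTheory.integral_congr_ae (Eventually.of_forall fun u => hψ u),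
        integral_const_mul, integral_expcos s K hs,
        indicator_of_mem (show τ ∈ Ioi (0:ℝ) from mem_Ioi.mpr hτ)]
      ring
    · have hzero : (fun t => G (t, τ)) = fun _ => 0 := by
        funext t
        rw [hG, indicator_of_notMem]
        intro hc; exact hτ hc.1
      rw [hzero, indicator_of_notMem (show τ ∉ Ioi (0:ℝ) by simpa using hτ)]
      simp
  -- Step 4: conclude
  have step4 : (∫ τ, ∫ t, G (t, τ))
      = (s/(s^2+K^2)) * (s * laplace f s - f 0) := by
    rw [MeasureTheory.integral_congr_ae (Eventually.of_forall inner_eq2),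
      integral_indicator measurableSet_Ioi, integral_const_mul,
      laplace_deriv f hf M c s hexp hexp' hs hsc]
    rw [laplace]
  rw [step1, swap, step4]
  have hden : (0:ℝ) < s^2 + K^2 := by positivity
  have hden2 : (0:ℝ) < (1-α)^2 * s^2 + α^2 := by positivity
  rw [← mul_assoc]
  congr 1
  rw [hK]
  field_simp
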